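/- Let a > 0 and define σ(x,y) = erf(√(2a)·x)·exp(ax²), where erf(t) = (2/√π)∫₀ᵗ e^{-s²} ds. Then σ satisfies the conformal-to-Einstein equation on ℝ² with P₁₁ = -a - 2a²x², P₁₂ = 0, P₂₂ = 2a²x² + a: namely ∂₁∂₁σ + P₁₁σ = ∂₂∂₂σ + P₂₂σ and ∂₁∂₂σ + P₁₂σ = 0. Moreover σ and exp(ax²) are linearly independent solutions. -/

import Mathlib

noncomputable def pd1 (f : ℝ → ℝ → ℝ) (x y : ℝ) : ℝ := deriv (fun t => f t y) x
noncomputable def pd2 (f : ℝ → ℝ → ℝ) (x y : ℝ) : ℝ := deriv (fun t => f x t) y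

/-- The Gaussian error function erf(t) = (2/√π)∫₀ᵗ e^{-s²} ds. -/
noncomputable def erf (t : ℝ) : ℝ :=
  (2 / Real.sqrt Real.pi) * ∫ s in (0:ℝ)..t, Real.exp (-s ^ 2)

lemma erf_hasDerivAt (t : ℝ) :
    HasDerivAt erf (2 / Real.sqrt Real.pi * Real.exp (-t ^ 2)) t := by
  have hc : Continuous fun s : ℝ => Real.exp (-s ^ 2) :=
    Real.continuous_exp.comp (continuous_pow 2).neg
  exact ((hc.integral_hasStrictDerivAt 0 t).hasDerivAt).const_mul _

lemma exp_sq_hasDerivAt (a x : ℝ) :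
    HasDerivAt (fun x => Real.exp (a * x ^ 2)) (2 * a * x * Real.exp (a * x ^ 2)) x := by
  have h : HasDerivAt (fun x : ℝ => a * x ^ 2) (2 * a * x) x := by
    have := (hasDerivAt_pow 2 x).const_mul a
    refine this.congr_deriv ?_
    ring
  simpa [mul_comm] using h.exp

noncomputable def myf (a x : ℝ) : ℝ := erf (Real.sqrt (2 * a) * x) * Real.exp (a * x ^ 2)
noncomputable def myg (a x : ℝ) : ℝ :=
  2 / Real.sqrt Real.pi * Real.sqrt (2 * a) * Real.exp (-(a * x ^ 2)) + 2 * a * x * myf a x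

lemma myf_hasDerivAt (a : ℝ) (ha : 0 < a) (x : ℝ) :
    HasDerivAt (myf a) (myg a x) x := by
  set s := Real.sqrt (2 * a) with hs
  have hs2 : s ^ 2 = 2 * a := Real.sq_sqrt (by linarith)
  have herf : HasDerivAt (fun x => erf (s * x))
      (2 / Real.sqrt Real.pi * Real.exp (-(s * x) ^ 2) * s) x :=
    (erf_hasDerivAt (s * x)).comp x (by simpa using (hasDerivAt_id x).const_mul s)
  have h := herf.mul (exp_sq_hasDerivAt a x)
  have hexp : Real.exp (-(s * x) ^ 2) * Real.exp (a * x ^ 2) = Real.exp (-(a * x ^ 2)) := by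
    rw [← Real.exp_add]
    congr 1
    nlinarith [hs2]
  refine h.congr_deriv ?_
  unfold myg myf
  rw [show (2 / Real.sqrt Real.pi * Real.exp (-(s * x) ^ 2) * s) * Real.exp (a * x ^ 2)
      = 2 / Real.sqrt Real.pi * s * (Real.exp (-(s * x) ^ 2) * Real.exp (a * x ^ 2)) by ring,
    hexp]
  ring

lemma myg_hasDerivAt (a : ℝ) (ha : 0 < a) (x : ℝ) :
    HasDerivAt (myg a) ((2 * a + 4 * a ^ 2 * x ^ 2) * myf a x) x := by
  have h1 : HasDerivAt (fun x => 2 / Real.sqrt Real.pi * Real.sqrt (2 * a) * Real.exp (-(a * x ^ 2)))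
      (2 / Real.sqrt Real.pi * Real.sqrt (2 * a) * ((-(2 * a * x)) * Real.exp (-(a * x ^ 2)))) x := by
    have h0 := (exp_sq_hasDerivAt (-a) x).const_mul (2 / Real.sqrt Real.pi * Real.sqrt (2 * a))
    simp only [neg_mul] at h0
    refine h0.congr_deriv ?_
    ring
  have h2 : HasDerivAt (fun x => 2 * a * x * myf a x)
      (2 * a * myf a x + 2 * a * x * myg a x) x := by
    have := (by simpa using (hasDerivAt_id x).const_mul (2 * a) :
      HasDerivAt (fun x : ℝ => 2 * a * x) (2 * a) x).mul (myf_hasDerivAt a ha x)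
    exact this
  have h := h1.add h2
  refine h.congr_deriv ?_
  unfold myg
  ring

lemma myh_hasDerivAt (a x : ℝ) :
    HasDerivAt (fun x => 2 * a * x * Real.exp (a * x ^ 2))
      ((2 * a + 4 * a ^ 2 * x ^ 2) * Real.exp (a * x ^ 2)) x := by
  have h := (by simpa using (hasDerivAt_id x).const_mul (2 * a) :
    HasDerivAt (fun x : ℝ => 2 * a * x) (2 * a) x).mul (exp_sq_hasDerivAt a x)
  refine h.congr_deriv ?_
  ring

lemma erf_pos {b : ℝ} (hb : 0 < b) : 0 < erf b := by
  unfold erf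
  have hc : Continuous fun s : ℝ => Real.exp (-s ^ 2) :=
    Real.continuous_exp.comp (continuous_pow 2).neg
  have hint : 0 < ∫ s in (0:ℝ)..b, Real.exp (-s ^ 2) :=
    intervalIntegral.intervalIntegral_pos_of_pos (hc.intervalIntegrable 0 b)
      (fun s => Real.exp_pos _) hb
  have : (0:ℝ) < 2 / Real.sqrt Real.pi :=
    div_pos two_pos (Real.sqrt_pos.mpr Real.pi_pos)
  positivity



theorem stmt6
    (a : ℝ) (ha : 0 < a)
    (σ τ P11 P12 P22 : ℝ → ℝ → ℝ)
    (hσ : σ = fun x _ => erf (Real.sqrt (2 * a) * x) * Real.exp (a * x ^ 2))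
    (hτ : τ = fun x _ => Real.exp (a * x ^ 2))
    (hP11 : P11 = fun x _ => -a - 2 * a ^ 2 * x ^ 2)
    (hP12 : P12 = fun _ _ => 0)
    (hP22 : P22 = fun x _ => 2 * a ^ 2 * x ^ 2 + a) :
    (∀ x y : ℝ,
      pd1 (pd1 σ) x y + P11 x y * σ x y = pd2 (pd2 σ) x y + P22 x y * σ x y ∧
      pd1 (pd2 σ) x y + P12 x y * σ x y = 0) ∧
    (∀ x y : ℝ,
      pd1 (pd1 τ) x y + P11 x y * τ x y = pd2 (pd2 τ) x y + P22 x y * τ x y ∧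
      pd1 (pd2 τ) x y + P12 x y * τ x y = 0) ∧
    (∀ c1 c2 : ℝ, (∀ x y : ℝ, c1 * σ x y + c2 * τ x y = 0) → c1 = 0 ∧ c2 = 0) := by
  subst hσ hτ hP11 hP12 hP22
  set σ := fun (x : ℝ) (_ : ℝ) => erf (Real.sqrt (2 * a) * x) * Real.exp (a * x ^ 2) with hσ
  set τ := fun (x : ℝ) (_ : ℝ) => Real.exp (a * x ^ 2) with hτ
  have hσ1 : ∀ t y : ℝ, pd1 σ t y = myg a t := fun t y => (myf_hasDerivAt a ha t).deriv
  have hσ2 : ∀ x t : ℝ, pd2 σ x t = 0 := fun x t => deriv_const t _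
  have hτ1 : ∀ t y : ℝ, pd1 τ t y = 2 * a * t * Real.exp (a * t ^ 2) :=
    fun t y => (exp_sq_hasDerivAt a t).deriv
  have hτ2 : ∀ x t : ℝ, pd2 τ x t = 0 := fun x t => deriv_const t _
  have hmyf : ∀ x y : ℝ, σ x y = myf a x := fun x y => rfl
  refine ⟨fun x y => ?_, fun x y => ?_, fun c1 c2 h => ?_⟩
  · constructor
    · have e1 : pd1 (pd1 σ) x y = (2 * a + 4 * a ^ 2 * x ^ 2) * myf a x := by
        show deriv (fun t => pd1 σ t y) x = _
        rw [show (fun t => pd1 σ t y) = myg a from funext fun t => hσ1 t y]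
        exact (myg_hasDerivAt a ha x).deriv
      have e2 : pd2 (pd2 σ) x y = 0 := by
        show deriv (fun t => pd2 σ x t) y = 0
        rw [show (fun t => pd2 σ x t) = fun _ => (0:ℝ) from funext fun t => hσ2 x t]
        exact deriv_const y _
      rw [e1, e2, hmyf x y]
      ring
    · have e3 : pd1 (pd2 σ) x y = 0 := by
        show deriv (fun t => pd2 σ t y) x = 0
        rw [show (fun t => pd2 σ t y) = fun _ => (0:ℝ) from funext fun t => hσ2 t y]
        exact deriv_const x _
      rw [e3]
      ring
  · constructor
    · have e1 : pd1 (pd1 τ) x y = (2 * a + 4 * a ^ 2 * x ^ 2) * Real.exp (a * x ^ 2) := by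
        show deriv (fun t => pd1 τ t y) x = _
        rw [show (fun t => pd1 τ t y) = fun t => 2 * a * t * Real.exp (a * t ^ 2)
          from funext fun t => hτ1 t y]
        exact (myh_hasDerivAt a x).deriv
      have e2 : pd2 (pd2 τ) x y = 0 := by
        show deriv (fun t => pd2 τ x t) y = 0
        rw [show (fun t => pd2 τ x t) = fun _ => (0:ℝ) from funext fun t => hτ2 x t]
        exact deriv_const y _
      rw [e1, e2]
      show _ = _ + _ * Real.exp (a * x ^ 2)
      ring
    · have e3 : pd1 (pd2 τ) x y = 0 := by
        show deriv (fun t => pd2 τ t y) x = 0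
        rw [show (fun t => pd2 τ t y) = fun _ => (0:ℝ) from funext fun t => hτ2 t y]
        exact deriv_const x _
      rw [e3]
      ring
  · have h0 : c1 * (erf (Real.sqrt (2 * a) * 0) * Real.exp (a * 0 ^ 2))
        + c2 * Real.exp (a * 0 ^ 2) = 0 := h 0 0
    have herf0 : erf (Real.sqrt (2 * a) * 0) = 0 := by simp [erf]
    rw [herf0] at h0
    simp at h0
    have hc2 : c2 = 0 := h0
    subst hc2
    refine ⟨?_, rfl⟩
    have h1 : c1 * (erf (Real.sqrt (2 * a) * 1) * Real.exp (a * 1 ^ 2))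
        + 0 * Real.exp (a * 1 ^ 2) = 0 := h 1 0
    have hpos : 0 < erf (Real.sqrt (2 * a) * 1) * Real.exp (a * 1 ^ 2) := by
      have hb : (0:ℝ) < Real.sqrt (2 * a) * 1 := by
        rw [mul_one]
        exact Real.sqrt_pos.mpr (by linarith)
      exact mul_pos (erf_pos hb) (Real.exp_pos _)
    rw [zero_mul, add_zero] at h1
    exact (mul_eq_zero.mp h1).resolve_right (ne_of_gt hpos)
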